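/- For any connected graph G of order n ≥ 2, 2n + γ_t(M(G)) ≤ γ_tc(M(G ∘ P_2)) ≤ 4n, where G ∘ P_2 is the 2-corona of G. -/

import Mathlib

open SimpleGraph

/-- The middle graph `M(G)`: vertices are `V(G) ⊕ E(G)`; an edge-vertex is adjacent to
another edge-vertex iff the edges are distinct and share an endpoint, and a vertex is
adjacent to an edge iff it is incident to it. -/
def middleGraph {V : Type*} (G : SimpleGraph V) : SimpleGraph (V ⊕ G.edgeSet) where
  Adj x y :=
    match x, y with
    | Sum.inl _, Sum.inl _ => False
    | Sum.inl v, Sum.inr e => v ∈ (e : Sym2 V)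
    | Sum.inr e, Sum.inl v => v ∈ (e : Sym2 V)
    | Sum.inr e, Sum.inr f => e ≠ f ∧ ∃ v, v ∈ (e : Sym2 V) ∧ v ∈ (f : Sym2 V)
  symm := by
    constructor
    rintro (v|e) (w|f) h
    · exact h
    · exact h
    · exact h
    · exact ⟨h.1.symm, h.2.imp fun v hv => ⟨hv.2, hv.1⟩⟩
  loopless := by
    constructor
    rintro (v|e) h
    · exact h
    · exact h.1 rfl

/-- `D` is a total dominating set of `G`: every vertex has a neighbour in `D`. -/
def IsTotalDomSet {V : Type*} (G : SimpleGraph V) (D : Set V) : Prop :=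
  ∀ v : V, ∃ u ∈ D, G.Adj v u

/-- `D` is a total outer-connected dominating set of `G`: it is total dominating and
the subgraph induced on the complement of `D` is connected. -/
def IsTOCDomSet {V : Type*} (G : SimpleGraph V) (D : Set V) : Prop :=
  IsTotalDomSet G D ∧ (G.induce Dᶜ).Connected

/-- The total domination number `γₜ(G)`. -/
noncomputable def totalDomNum {V : Type*} (G : SimpleGraph V) : ℕ :=
  sInf {k | ∃ D : Set V, IsTotalDomSet G D ∧ D.ncard = k}

/-- The total outer-connected domination number `γ_tc(G)`. -/
noncomputable def tocDomNum {V : Type*} (G : SimpleGraph V) : ℕ :=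
  sInf {k | ∃ D : Set V, IsTOCDomSet G D ∧ D.ncard = k}

/-- The set of leaves (vertices of degree 1) of `G`. -/
def leafSet {V : Type*} (G : SimpleGraph V) : Set V :=
  {v | ∃ u, G.neighborSet v = {u}}

/-- The wheel graph with hub `none` and rim cycle on `Fin n`. -/
def wheelGraph (n : ℕ) : SimpleGraph (Option (Fin n)) where
  Adj x y :=
    match x, y with
    | none, none => False
    | none, some _ => True
    | some _, none => True
    | some i, some j => (SimpleGraph.cycleGraph n).Adj i j
  symm := by
    constructor
    rintro (_|i) (_|j) h
    · exact h
    · exact h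
    · exact h
    · exact (SimpleGraph.cycleGraph n).symm.symm _ _ h
  loopless := by
    constructor
    rintro (_|i) h
    · exact h
    · exact (SimpleGraph.cycleGraph n).loopless.irrefl i h

/-- The corona `G ∘ K₁`: to each vertex `a` of `G` (copy `Sum.inl a`) a pendant
vertex `Sum.inr a` is attached. -/
def corona {V : Type*} (G : SimpleGraph V) : SimpleGraph (V ⊕ V) where
  Adj x y :=
    match x, y with
    | Sum.inl a, Sum.inl b => G.Adj a b
    | Sum.inl a, Sum.inr b => a = b
    | Sum.inr a, Sum.inl b => a = b
    | Sum.inr _, Sum.inr _ => False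
  symm := by
    constructor
    rintro (a|a) (b|b) h
    · exact G.symm.symm _ _ h
    · exact h.symm
    · exact h.symm
    · exact h
  loopless := by
    constructor
    rintro (a|a) h
    · exact G.loopless.irrefl a h
    · exact h

/-- The 2-corona `G ∘ P₂`: to each vertex `a` of `G` (copy `Sum.inl a`) a path
`Sum.inl a — Sum.inr (Sum.inl a) — Sum.inr (Sum.inr a)` of length 2 is attached. -/
def corona2 {V : Type*} (G : SimpleGraph V) : SimpleGraph (V ⊕ V ⊕ V) where
  Adj x y :=
    match x, y with
    | Sum.inl a, Sum.inl b => G.Adj a b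
    | Sum.inl a, Sum.inr (Sum.inl b) => a = b
    | Sum.inr (Sum.inl a), Sum.inl b => a = b
    | Sum.inr (Sum.inl a), Sum.inr (Sum.inr b) => a = b
    | Sum.inr (Sum.inr a), Sum.inr (Sum.inl b) => a = b
    | _, _ => False
  symm := by
    constructor
    rintro (a|a|a) (b|b|b) h <;> first | exact G.symm.symm _ _ h | exact h.symm | exact h
  loopless := by
    constructor
    rintro (a|a|a) h
    · exact G.loopless.irrefl a h
    · exact h
    · exact h

/-- The spider `S_{1,n,n}`: hub `none`, middle vertices `some (.inl i)`,
leaves `some (.inr i)`; the star `K_{1,n}` with every edge subdivided once. -/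
def spiderGraph (n : ℕ) : SimpleGraph (Option (Fin n ⊕ Fin n)) where
  Adj x y :=
    match x, y with
    | none, some (Sum.inl _) => True
    | some (Sum.inl _), none => True
    | some (Sum.inl i), some (Sum.inr j) => i = j
    | some (Sum.inr i), some (Sum.inl j) => i = j
    | _, _ => False
  symm := by
    constructor
    rintro (_|i|i) (_|j|j) h <;> first | exact h.symm | exact h
  loopless := by
    constructor
    rintro (_|i|i) h <;> exact h

/-- The friendship graph `Fₙ`: `n` triangles sharing the common vertex `none`. -/
def friendshipGraph (n : ℕ) : SimpleGraph (Option (Fin n × Fin 2)) where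
  Adj x y :=
    match x, y with
    | none, some _ => True
    | some _, none => True
    | some (i, a), some (j, b) => i = j ∧ a ≠ b
    | none, none => False
  symm := by
    constructor
    rintro (_|⟨i,a⟩) (_|⟨j,b⟩) h <;> first | exact ⟨h.1.symm, h.2.symm⟩ | exact h
  loopless := by
    constructor
    rintro (_|⟨i,a⟩) h
    · exact h
    · exact h.2 rfl

section Stmt15Aux

open Sum

variable {V : Type*}

/-- The pendant edge `e_a` of the 2-corona. -/
def auxE (G : SimpleGraph V) (a : V) : (corona2 G).edgeSet :=
  ⟨s(Sum.inl a, Sum.inr (Sum.inl a)), by rw [SimpleGraph.mem_edgeSet]; exact rfl⟩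

/-- The pendant edge `f_a` of the 2-corona. -/
def auxF (G : SimpleGraph V) (a : V) : (corona2 G).edgeSet :=
  ⟨s(Sum.inr (Sum.inl a), Sum.inr (Sum.inr a)), by rw [SimpleGraph.mem_edgeSet]; exact rfl⟩

lemma map_inl_mem {G : SimpleGraph V} {e : Sym2 V} (he : e ∈ G.edgeSet) :
    Sym2.map Sum.inl e ∈ (corona2 G).edgeSet := by
  induction e using Sym2.ind with
  | _ x y =>
    rw [Sym2.map_pair_eq, SimpleGraph.mem_edgeSet]
    rw [SimpleGraph.mem_edgeSet] at he
    exact he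

lemma map_inl_ne_auxE {G : SimpleGraph V} (g : Sym2 V) (a : V) :
    Sym2.map Sum.inl g ≠ (auxE G a).1 := by
  intro h
  have : (Sum.inr (Sum.inl a) : V ⊕ V ⊕ V) ∈ Sym2.map Sum.inl g := by
    rw [h]; exact Sym2.mem_mk_right _ _
  rw [Sym2.mem_map] at this
  obtain ⟨v, -, hv⟩ := this
  simp at hv

lemma map_inl_ne_auxF {G : SimpleGraph V} (g : Sym2 V) (a : V) :
    Sym2.map Sum.inl g ≠ (auxF G a).1 := by
  intro h
  have : (Sum.inr (Sum.inl a) : V ⊕ V ⊕ V) ∈ Sym2.map Sum.inl g := by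
    rw [h]; exact Sym2.mem_mk_left _ _
  rw [Sym2.mem_map] at this
  obtain ⟨v, -, hv⟩ := this
  simp at hv

/-- Classification of corona2 edges. -/
lemma corona2_edge_cases {G : SimpleGraph V} {e : Sym2 (V ⊕ V ⊕ V)}
    (he : e ∈ (corona2 G).edgeSet) :
    (∃ g ∈ G.edgeSet, e = Sym2.map Sum.inl g) ∨ (∃ a, e = (auxE G a).1) ∨
      (∃ a, e = (auxF G a).1) := by
  induction e using Sym2.ind with
  | _ x y =>
    rw [SimpleGraph.mem_edgeSet] at he
    rcases x with a | a | a <;> rcases y with b | b | b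
    · exact Or.inl ⟨s(a, b), he, by rw [Sym2.map_pair_eq]⟩
    · have hab : a = b := he
      subst hab
      exact Or.inr (Or.inl ⟨a, rfl⟩)
    · exact absurd he (by exact fun h => h)
    · have hab : a = b := he
      subst hab
      exact Or.inr (Or.inl ⟨a, Sym2.eq_swap⟩)
    · exact absurd he (by exact fun h => h)
    · have hab : a = b := he
      subst hab
      exact Or.inr (Or.inr ⟨a, rfl⟩)
    · exact absurd he (by exact fun h => h)
    · have hab : a = b := he
      subst hab
      exact Or.inr (Or.inr ⟨a, Sym2.eq_swap⟩)
    · exact absurd he (by exact fun h => h)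

end Stmt15Aux
section Stmt15Aux2

variable {V : Type*}

lemma reachable_ne_adj {W : Type*} {H : SimpleGraph W} {u v : W} (h : H.Reachable u v)
    (hne : u ≠ v) : ∃ z, H.Adj u z := by
  obtain ⟨w⟩ := h
  cases w with
  | nil => exact absurd rfl hne
  | cons h p => exact ⟨_, h⟩

lemma compl_eq_singleton {W : Type*} {H : SimpleGraph W} {D : Set W}
    (hc : (H.induce Dᶜ).Connected) {x : W} (hx : x ∉ D)
    (hiso : ∀ y, H.Adj x y → y ∈ D) : Dᶜ = {x} := by
  ext y
  simp only [Set.mem_singleton_iff, Set.mem_compl_iff]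
  constructor
  · intro hy
    by_contra hne
    have hr : (H.induce Dᶜ).Reachable ⟨x, hx⟩ ⟨y, hy⟩ := hc.preconnected _ _
    obtain ⟨z, hz⟩ := reachable_ne_adj hr (by simp [Subtype.ext_iff]; exact fun h => hne h.symm)
    exact z.2 (hiso z.1 hz)
  · rintro rfl; exact hx

/-- The only corona2-edge containing the leaf `inr (inr a)` is `f_a`. -/
lemma only_f {G : SimpleGraph V} {e : Sym2 (V ⊕ V ⊕ V)} {a : V}
    (he : e ∈ (corona2 G).edgeSet) (hm : (Sum.inr (Sum.inr a) : V ⊕ V ⊕ V) ∈ e) :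
    e = (auxF G a).1 := by
  induction e using Sym2.ind with
  | _ x y =>
    rw [SimpleGraph.mem_edgeSet] at he
    rw [Sym2.mem_iff] at hm
    rcases hm with hm | hm
    · subst hm
      rcases y with b | b | b
      · exact absurd he (fun h => h)
      · have hab : a = b := he
        subst hab
        exact Sym2.eq_swap
      · exact absurd he (fun h => h)
    · subst hm
      rcases x with b | b | b
      · exact absurd he (fun h => h)
      · have hab : b = a := he
        subst hab
        rfl
      · exact absurd he (fun h => h)

/-- The only corona2-edges containing the middle vertex `inr (inl a)` are `e_a` and `f_a`. -/
lemma mid_edge_classify {G : SimpleGraph V} {e : Sym2 (V ⊕ V ⊕ V)} {a : V}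
    (he : e ∈ (corona2 G).edgeSet) (hm : (Sum.inr (Sum.inl a) : V ⊕ V ⊕ V) ∈ e) :
    e = (auxE G a).1 ∨ e = (auxF G a).1 := by
  induction e using Sym2.ind with
  | _ x y =>
    rw [SimpleGraph.mem_edgeSet] at he
    rw [Sym2.mem_iff] at hm
    rcases hm with hm | hm
    · subst hm
      rcases y with b | b | b
      · have hab : a = b := he
        subst hab
        exact Or.inl Sym2.eq_swap
      · exact absurd he (fun h => h)
      · have hab : a = b := he
        subst hab
        exact Or.inr rfl
    · subst hm
      rcases x with b | b | b
      · have hab : b = a := he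
        subst hab
        exact Or.inl rfl
      · exact absurd he (fun h => h)
      · have hab : b = a := he
        subst hab
        exact Or.inr Sym2.eq_swap

/-- The corona2-edges containing `inl a` are `G`-image edges at `a` and `e_a`. -/
lemma inl_mem_classify {G : SimpleGraph V} {e : Sym2 (V ⊕ V ⊕ V)} {a : V}
    (he : e ∈ (corona2 G).edgeSet) (hm : (Sum.inl a : V ⊕ V ⊕ V) ∈ e) :
    (∃ b, G.Adj a b ∧ e = s(Sum.inl a, Sum.inl b)) ∨ e = (auxE G a).1 := by
  induction e using Sym2.ind with
  | _ x y =>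
    rw [SimpleGraph.mem_edgeSet] at he
    rw [Sym2.mem_iff] at hm
    rcases hm with hm | hm
    · subst hm
      rcases y with b | b | b
      · exact Or.inl ⟨b, he, rfl⟩
      · have hab : a = b := he
        subst hab
        exact Or.inr rfl
      · exact absurd he (fun h => h)
    · subst hm
      rcases x with b | b | b
      · have hab : G.Adj b a := he
        exact Or.inl ⟨b, hab.symm, Sym2.eq_swap⟩
      · have hab : b = a := he
        subst hab
        exact Or.inr Sym2.eq_swap
      · exact absurd he (fun h => h)

end Stmt15Aux2
section Stmt15Aux3

variable {V : Type*}

/-- The 4n-element TOC dominating set of `M(G ∘ P₂)`, as a function. -/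
def upFun (G : SimpleGraph V) : (V ⊕ V) ⊕ (V ⊕ V) → (V ⊕ V ⊕ V) ⊕ (corona2 G).edgeSet
  | Sum.inl (Sum.inl a) => Sum.inl (Sum.inr (Sum.inl a))
  | Sum.inl (Sum.inr a) => Sum.inl (Sum.inr (Sum.inr a))
  | Sum.inr (Sum.inl a) => Sum.inr (auxE G a)
  | Sum.inr (Sum.inr a) => Sum.inr (auxF G a)

lemma upFun_injective (G : SimpleGraph V) : Function.Injective (upFun G) := by
  rintro ((a | a) | (a | a)) ((b | b) | (b | b)) h <;>
    simp [upFun, auxE, auxF, Subtype.ext_iff, Sym2.eq_iff] at h <;> simp [h]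

/-- The 2n-element forced subset of any TOC dominating set. -/
def bFun (G : SimpleGraph V) : V ⊕ V → (V ⊕ V ⊕ V) ⊕ (corona2 G).edgeSet
  | Sum.inl a => Sum.inl (Sum.inr (Sum.inr a))
  | Sum.inr a => Sum.inr (auxF G a)

lemma bFun_injective (G : SimpleGraph V) : Function.Injective (bFun G) := by
  rintro (a | a) (b | b) h <;>
    simp [bFun, auxF, Subtype.ext_iff, Sym2.eq_iff] at h <;> simp [h]

lemma ncard_range_eq {α β : Type*} [Fintype α] [Finite β] {f : α → β}
    (hf : Function.Injective f) : (Set.range f).ncard = Fintype.card α := by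
  rw [← Nat.card_coe_set_eq, Nat.card_range_of_injective hf, Nat.card_eq_fintype_card]

lemma univ_tds {G : SimpleGraph V} (hadj : ∀ a, ∃ b, G.Adj a b) :
    IsTotalDomSet (middleGraph G) Set.univ := by
  rintro (a | ⟨e, he⟩)
  · obtain ⟨b, h⟩ := hadj a
    exact ⟨Sum.inr ⟨s(a, b), h⟩, trivial, Sym2.mem_mk_left _ _⟩
  · induction e using Sym2.ind with
    | _ x y => exact ⟨Sum.inl x, trivial, Sym2.mem_mk_left _ _⟩

lemma exists_adj_of_connected {G : SimpleGraph V} [Fintype V] (hG : G.Connected)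
    (hn : 2 ≤ Fintype.card V) (a : V) : ∃ b, G.Adj a b := by
  obtain ⟨b, hb⟩ := Fintype.exists_ne_of_one_lt_card (by omega) a
  exact reachable_ne_adj (hG.preconnected a b) (Ne.symm hb)

end Stmt15Aux3
section Stmt15Aux4

variable {V : Type*}

lemma upFun_tds (G : SimpleGraph V) :
    IsTotalDomSet (middleGraph (corona2 G)) (Set.range (upFun G)) := by
  rintro ((a | a | a) | ⟨e, he⟩)
  · exact ⟨Sum.inr (auxE G a), ⟨Sum.inr (Sum.inl a), rfl⟩, Sym2.mem_mk_left _ _⟩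
  · exact ⟨Sum.inr (auxE G a), ⟨Sum.inr (Sum.inl a), rfl⟩, Sym2.mem_mk_right _ _⟩
  · exact ⟨Sum.inr (auxF G a), ⟨Sum.inr (Sum.inr a), rfl⟩, Sym2.mem_mk_right _ _⟩
  · rcases corona2_edge_cases he with ⟨g, hg, hE⟩ | ⟨a, hE⟩ | ⟨a, hE⟩
    · induction g using Sym2.ind with
      | _ a b =>
        subst hE
        refine ⟨Sum.inr (auxE G a), ⟨Sum.inr (Sum.inl a), rfl⟩, ?_, ?_⟩
        · intro h
          exact map_inl_ne_auxE s(a, b) a (congrArg Subtype.val h)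
        · refine ⟨Sum.inl a, ?_, Sym2.mem_mk_left _ _⟩
          show (Sum.inl a : V ⊕ V ⊕ V) ∈ Sym2.map Sum.inl s(a, b)
          rw [Sym2.map_pair_eq]; exact Sym2.mem_mk_left _ _
    · subst hE
      exact ⟨Sum.inl (Sum.inr (Sum.inl a)), ⟨Sum.inl (Sum.inl a), rfl⟩,
        Sym2.mem_mk_right _ _⟩
    · subst hE
      exact ⟨Sum.inl (Sum.inr (Sum.inl a)), ⟨Sum.inl (Sum.inl a), rfl⟩,
        Sym2.mem_mk_left _ _⟩

lemma inl_inl_not_range (G : SimpleGraph V) (a : V) :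
    (Sum.inl (Sum.inl a) : (V ⊕ V ⊕ V) ⊕ (corona2 G).edgeSet) ∉ Set.range (upFun G) := by
  rintro ⟨(x | x) | (x | x), h⟩ <;> simp [upFun] at h

lemma map_edge_not_range (G : SimpleGraph V) {g : Sym2 V} (hg : g ∈ G.edgeSet) :
    (Sum.inr ⟨Sym2.map Sum.inl g, map_inl_mem hg⟩ :
      (V ⊕ V ⊕ V) ⊕ (corona2 G).edgeSet) ∉ Set.range (upFun G) := by
  rintro ⟨(x | x) | (x | x), h⟩ <;> simp only [upFun] at h
  · exact absurd h (by simp)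
  · exact absurd h (by simp)
  · rw [Sum.inr.injEq, Subtype.ext_iff] at h
    exact map_inl_ne_auxE g x h.symm
  · rw [Sum.inr.injEq, Subtype.ext_iff] at h
    exact map_inl_ne_auxF g x h.symm

lemma upFun_conn (G : SimpleGraph V) [Fintype V] (hG : G.Connected)
    (hn : 2 ≤ Fintype.card V) :
    ((middleGraph (corona2 G)).induce (Set.range (upFun G))ᶜ).Connected := by
  have hnV : Nonempty V := Fintype.card_pos_iff.mp (by omega)
  set I := (middleGraph (corona2 G)).induce (Set.range (upFun G))ᶜ with hI
  have hvin : ∀ a : V, (Sum.inl (Sum.inl a) : (V ⊕ V ⊕ V) ⊕ (corona2 G).edgeSet) ∈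
      (Set.range (upFun G))ᶜ := fun a => inl_inl_not_range G a
  have hstep : ∀ a b : V, G.Adj a b →
      I.Reachable ⟨Sum.inl (Sum.inl a), hvin a⟩ ⟨Sum.inl (Sum.inl b), hvin b⟩ := by
    intro a b hab
    have hgm : s(a, b) ∈ G.edgeSet := hab
    have hec : (Sum.inr ⟨Sym2.map Sum.inl s(a, b), map_inl_mem hgm⟩ :
        (V ⊕ V ⊕ V) ⊕ (corona2 G).edgeSet) ∈ (Set.range (upFun G))ᶜ :=
      map_edge_not_range G hgm
    have h1 : I.Adj ⟨Sum.inl (Sum.inl a), hvin a⟩ ⟨_, hec⟩ := by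
      show (Sum.inl a : V ⊕ V ⊕ V) ∈ Sym2.map Sum.inl s(a, b)
      rw [Sym2.map_pair_eq]; exact Sym2.mem_mk_left _ _
    have h2 : I.Adj ⟨Sum.inl (Sum.inl b), hvin b⟩ ⟨_, hec⟩ := by
      show (Sum.inl b : V ⊕ V ⊕ V) ∈ Sym2.map Sum.inl s(a, b)
      rw [Sym2.map_pair_eq]; exact Sym2.mem_mk_right _ _
    exact h1.reachable.trans h2.symm.reachable
  have hGreach : ∀ a b : V,
      I.Reachable ⟨Sum.inl (Sum.inl a), hvin a⟩ ⟨Sum.inl (Sum.inl b), hvin b⟩ := by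
    intro a b
    obtain ⟨w⟩ := hG.preconnected a b
    induction w with
    | nil => exact SimpleGraph.Reachable.refl _
    | cons h p ih => exact (hstep _ _ h).trans ih
  have hout : ∀ x : ↥(Set.range (upFun G))ᶜ, ∃ a : V,
      I.Reachable x ⟨Sum.inl (Sum.inl a), hvin a⟩ := by
    rintro ⟨(a | a | a) | ⟨e, he⟩, hx⟩
    · exact ⟨a, SimpleGraph.Reachable.refl _⟩
    · exact absurd ⟨Sum.inl (Sum.inl a), rfl⟩ hx
    · exact absurd ⟨Sum.inl (Sum.inr a), rfl⟩ hx
    · rcases corona2_edge_cases he with ⟨g, hg, hE⟩ | ⟨a, hE⟩ | ⟨a, hE⟩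
      · induction g using Sym2.ind with
        | _ a b =>
          subst hE
          refine ⟨a, SimpleGraph.Adj.reachable ?_⟩
          show (Sum.inl a : V ⊕ V ⊕ V) ∈ Sym2.map Sum.inl s(a, b)
          rw [Sym2.map_pair_eq]; exact Sym2.mem_mk_left _ _
      · refine absurd ⟨Sum.inr (Sum.inl a), ?_⟩ hx
        simp only [upFun]
        rw [Sum.inr.injEq]
        exact Subtype.ext hE.symm
      · refine absurd ⟨Sum.inr (Sum.inr a), ?_⟩ hx
        simp only [upFun]
        rw [Sum.inr.injEq]
        exact Subtype.ext hE.symm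
  rw [SimpleGraph.connected_iff]
  constructor
  · intro x y
    obtain ⟨a, hx⟩ := hout x
    obtain ⟨b, hy⟩ := hout y
    exact hx.trans ((hGreach a b).trans hy.symm)
  · exact ⟨⟨Sum.inl (Sum.inl (Classical.arbitrary V)), hvin _⟩⟩

end Stmt15Aux4
section Stmt15Aux5

variable {V : Type*}

open Classical in
noncomputable def phiE (G : SimpleGraph V) (gdg : V → V) (hgdg : ∀ a, G.Adj a (gdg a)) (v0 : V) :
    Sym2 (V ⊕ V ⊕ V) → V ⊕ G.edgeSet :=
  Sym2.lift ⟨fun x y =>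
    match x, y with
    | Sum.inl a, Sum.inl b => if h : G.Adj a b then Sum.inr ⟨s(a, b), h⟩ else Sum.inl v0
    | Sum.inl a, Sum.inr _ => Sum.inr ⟨s(a, gdg a), hgdg a⟩
    | Sum.inr _, Sum.inl b => Sum.inr ⟨s(b, gdg b), hgdg b⟩
    | Sum.inr _, Sum.inr _ => Sum.inl v0, by
    rintro (a | x) (b | y)
    · by_cases h : G.Adj a b
      · show dite _ _ _ = dite _ _ _
        rw [dif_pos h, dif_pos h.symm]
        exact congrArg Sum.inr (Subtype.ext Sym2.eq_swap)
      · show dite _ _ _ = dite _ _ _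
        rw [dif_neg h, dif_neg (fun h' => h h'.symm)]
    · rfl
    · rfl
    · rfl⟩

lemma phiE_inl_inl {G : SimpleGraph V} {gdg : V → V} {hgdg : ∀ a, G.Adj a (gdg a)} {v0 : V}
    {a b : V} (h : G.Adj a b) :
    phiE G gdg hgdg v0 s(Sum.inl a, Sum.inl b) = Sum.inr ⟨s(a, b), h⟩ := by
  simp only [phiE, Sym2.lift_mk]
  exact dif_pos h

lemma phiE_auxE {G : SimpleGraph V} {gdg : V → V} {hgdg : ∀ a, G.Adj a (gdg a)} {v0 : V}
    (a : V) :
    phiE G gdg hgdg v0 (auxE G a).1 = Sum.inr ⟨s(a, gdg a), hgdg a⟩ := by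
  simp only [auxE, phiE, Sym2.lift_mk]

/-- Projection of vertices of `M(G ∘ P₂)` to vertices of `M(G)`. -/
noncomputable def phi (G : SimpleGraph V) (gdg : V → V) (hgdg : ∀ a, G.Adj a (gdg a)) (v0 : V) :
    (V ⊕ V ⊕ V) ⊕ (corona2 G).edgeSet → V ⊕ G.edgeSet
  | Sum.inl (Sum.inl a) => Sum.inl a
  | Sum.inl (Sum.inr (Sum.inl a)) => Sum.inl a
  | Sum.inl (Sum.inr (Sum.inr _)) => Sum.inl v0
  | Sum.inr e => phiE G gdg hgdg v0 e.1

lemma inr_notin_range_bFun {G : SimpleGraph V} {e : Sym2 (V ⊕ V ⊕ V)}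
    {he : e ∈ (corona2 G).edgeSet} (hm : ∃ a : V, (Sum.inl a : V ⊕ V ⊕ V) ∈ e) :
    (Sum.inr ⟨e, he⟩ : (V ⊕ V ⊕ V) ⊕ (corona2 G).edgeSet) ∉ Set.range (bFun G) := by
  rintro ⟨(c | c), hc⟩
  · simp [bFun] at hc
  · rw [show bFun G (Sum.inr c) = Sum.inr (auxF G c) from rfl, Sum.inr.injEq,
      Subtype.ext_iff] at hc
    obtain ⟨a, ha⟩ := hm
    have hc' : (auxF G c).1 = e := hc
    rw [← hc'] at ha
    rw [show (auxF G c).1 = s(Sum.inr (Sum.inl c), Sum.inr (Sum.inr c)) from rfl,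
      Sym2.mem_iff] at ha
    rcases ha with h | h <;> simp at h

lemma inl_notin_range_bFun {G : SimpleGraph V} (a : V) :
    (Sum.inl (Sum.inl a) : (V ⊕ V ⊕ V) ⊕ (corona2 G).edgeSet) ∉ Set.range (bFun G) := by
  rintro ⟨(c | c), hc⟩ <;> simp [bFun] at hc

lemma inrinl_notin_range_bFun {G : SimpleGraph V} (a : V) :
    (Sum.inl (Sum.inr (Sum.inl a)) : (V ⊕ V ⊕ V) ⊕ (corona2 G).edgeSet) ∉
      Set.range (bFun G) := by
  rintro ⟨(c | c), hc⟩ <;> simp [bFun] at hc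

end Stmt15Aux5
section Stmt15Aux6

variable {V : Type*} [Fintype V]

lemma lower_bound (G : SimpleGraph V) (hG : G.Connected) (hn : 2 ≤ Fintype.card V)
    {D : Set ((V ⊕ V ⊕ V) ⊕ (corona2 G).edgeSet)}
    (hD : IsTOCDomSet (middleGraph (corona2 G)) D) :
    2 * Fintype.card V + totalDomNum (middleGraph G) ≤ D.ncard := by
  have hnV : Nonempty V := Fintype.card_pos_iff.mp (by omega)
  have hadjall : ∀ a, ∃ b, G.Adj a b := exists_adj_of_connected hG hn
  have hf : ∀ a : V, Sum.inr (auxF G a) ∈ D := by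
    intro a
    obtain ⟨u, hu, hadj⟩ := hD.1 (Sum.inl (Sum.inr (Sum.inr a)))
    rcases u with w | ⟨e, he⟩
    · exact absurd hadj (fun h => h)
    · have h1 : e = (auxF G a).1 := only_f he hadj
      rwa [show (⟨e, he⟩ : (corona2 G).edgeSet) = auxF G a from Subtype.ext h1] at hu
  by_cases hsing : ∃ x, x ∉ D ∧ ∀ y, (middleGraph (corona2 G)).Adj x y → y ∈ D
  · -- the complement is a single vertex
    obtain ⟨x, hx, hiso⟩ := hsing
    have hcompl := compl_eq_singleton hD.2 hx hiso
    have hcard : D.ncard + 1 = Nat.card ((V ⊕ V ⊕ V) ⊕ ↥(corona2 G).edgeSet) := by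
      have h := Set.ncard_add_ncard_compl D
      rwa [hcompl, Set.ncard_singleton] at h
    have hγ : totalDomNum (middleGraph G) ≤ Fintype.card V + Nat.card ↥G.edgeSet := by
      apply Nat.sInf_le
      refine ⟨Set.univ, univ_tds hadjall, ?_⟩
      rw [Set.ncard_univ, Nat.card_sum, Nat.card_eq_fintype_card]
    have hm1 : Nat.card ↥G.edgeSet + 1 ≤ Nat.card ↥(corona2 G).edgeSet := by
      obtain ⟨a0⟩ := hnV
      have hsub : insert (auxE G a0).1 (Sym2.map Sum.inl '' G.edgeSet) ⊆
          (corona2 G).edgeSet := by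
        rintro e (rfl | ⟨g, hg, rfl⟩)
        · exact (auxE G a0).2
        · exact map_inl_mem hg
      have h1 : (insert (auxE G a0).1 (Sym2.map Sum.inl '' G.edgeSet)).ncard =
          (Sym2.map Sum.inl '' G.edgeSet).ncard + 1 :=
        Set.ncard_insert_of_notMem
          (by rintro ⟨g, hg, hE⟩; exact map_inl_ne_auxE g a0 hE) (Set.toFinite _)
      have h2 : (Sym2.map (Sum.inl : V → V ⊕ V ⊕ V) '' G.edgeSet).ncard =
          G.edgeSet.ncard :=
        Set.ncard_image_of_injective _ (Sym2.map.injective Sum.inl_injective)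
      have h3 := Set.ncard_le_ncard hsub (Set.toFinite _)
      calc Nat.card ↥G.edgeSet + 1 = G.edgeSet.ncard + 1 := by
            rw [Nat.card_coe_set_eq]
        _ = (insert (auxE G a0).1 (Sym2.map Sum.inl '' G.edgeSet)).ncard := by
            rw [h1, h2]
        _ ≤ (corona2 G).edgeSet.ncard := h3
        _ = Nat.card ↥(corona2 G).edgeSet := (Nat.card_coe_set_eq _).symm
    have hW : Nat.card ((V ⊕ V ⊕ V) ⊕ ↥(corona2 G).edgeSet) =
        Fintype.card V + (Fintype.card V + Fintype.card V) +
          Nat.card ↥(corona2 G).edgeSet := by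
      rw [Nat.card_sum, Nat.card_sum, Nat.card_sum, Nat.card_eq_fintype_card]
    omega
  · push_neg at hsing
    have hv2 : ∀ a : V, Sum.inl (Sum.inr (Sum.inr a)) ∈ D := by
      intro a; by_contra h
      obtain ⟨y, hyadj, hy⟩ := hsing _ h
      rcases y with w | ⟨e, he⟩
      · exact hyadj
      · have h1 : e = (auxF G a).1 := only_f he hyadj
        exact hy (by
          rw [show (⟨e, he⟩ : (corona2 G).edgeSet) = auxF G a from Subtype.ext h1]
          exact hf a)
    have hstar : ∀ a : V, Sum.inr (auxE G a) ∈ D → Sum.inl (Sum.inr (Sum.inl a)) ∈ D := by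
      intro a hE; by_contra h
      obtain ⟨y, hyadj, hy⟩ := hsing _ h
      rcases y with w | ⟨e, he⟩
      · exact hyadj
      · rcases mid_edge_classify he hyadj with h1 | h1
        · exact hy (by
            rw [show (⟨e, he⟩ : (corona2 G).edgeSet) = auxE G a from Subtype.ext h1]
            exact hE)
        · exact hy (by
            rw [show (⟨e, he⟩ : (corona2 G).edgeSet) = auxF G a from Subtype.ext h1]
            exact hf a)
    have hBD : Set.range (bFun G) ⊆ D := by
      rintro _ ⟨(a | a), rfl⟩
      · exact hv2 a
      · exact hf a
    choose gdg hgdg using hadjall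
    have hTDS : IsTotalDomSet (middleGraph G)
        (phi G gdg hgdg (Classical.arbitrary V) '' (D \ Set.range (bFun G))) := by
      rintro (a | ⟨g, hg⟩)
      · obtain ⟨u, hu, hadj⟩ := hD.1 (Sum.inl (Sum.inl a))
        rcases u with w | ⟨e, he⟩
        · exact absurd hadj (fun h => h)
        · rcases inl_mem_classify he hadj with ⟨b, hab, hE⟩ | hE
          · subst hE
            refine ⟨Sum.inr ⟨s(a, b), hab⟩,
              ⟨Sum.inr ⟨s(Sum.inl a, Sum.inl b), he⟩,
                ⟨hu, inr_notin_range_bFun ⟨a, Sym2.mem_mk_left _ _⟩⟩, ?_⟩,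
              Sym2.mem_mk_left _ _⟩
            exact phiE_inl_inl hab
          · have hEa : (⟨e, he⟩ : (corona2 G).edgeSet) = auxE G a := Subtype.ext hE
            rw [hEa] at hu
            refine ⟨Sum.inr ⟨s(a, gdg a), hgdg a⟩,
              ⟨Sum.inr (auxE G a),
                ⟨hu, inr_notin_range_bFun ⟨a, Sym2.mem_mk_left _ _⟩⟩, ?_⟩,
              Sym2.mem_mk_left _ _⟩
            exact phiE_auxE a
      · revert hg
        induction g using Sym2.ind with
        | _ a b =>
          intro hg
          obtain ⟨u, hu, hadj⟩ :=
            hD.1 (Sum.inr ⟨Sym2.map Sum.inl s(a, b), map_inl_mem hg⟩)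
          rcases u with w | ⟨e', he'⟩
          · have hm : w ∈ Sym2.map Sum.inl s(a, b) := hadj
            rw [Sym2.map_pair_eq, Sym2.mem_iff] at hm
            have hw : ∃ c, w = Sum.inl c ∧ c ∈ s(a, b) := by
              rcases hm with rfl | rfl
              exacts [⟨a, rfl, Sym2.mem_mk_left _ _⟩, ⟨b, rfl, Sym2.mem_mk_right _ _⟩]
            obtain ⟨c, rfl, hc⟩ := hw
            exact ⟨Sum.inl c,
              ⟨Sum.inl (Sum.inl c), ⟨hu, inl_notin_range_bFun c⟩, rfl⟩, hc⟩
          · obtain ⟨hne, w, hw1, hw2⟩ := hadj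
            have hw1' : w ∈ Sym2.map Sum.inl s(a, b) := hw1
            have hw2' : w ∈ e' := hw2
            rw [Sym2.map_pair_eq, Sym2.mem_iff] at hw1'
            have hw : ∃ c, w = Sum.inl c ∧ c ∈ s(a, b) := by
              rcases hw1' with rfl | rfl
              exacts [⟨a, rfl, Sym2.mem_mk_left _ _⟩, ⟨b, rfl, Sym2.mem_mk_right _ _⟩]
            obtain ⟨c, rfl, hc⟩ := hw
            rcases inl_mem_classify he' hw2' with ⟨d, hcd, hE⟩ | hE
            · subst hE
              refine ⟨Sum.inr ⟨s(c, d), hcd⟩,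
                ⟨Sum.inr ⟨s(Sum.inl c, Sum.inl d), he'⟩,
                  ⟨hu, inr_notin_range_bFun ⟨c, Sym2.mem_mk_left _ _⟩⟩,
                  phiE_inl_inl hcd⟩, ?_, ⟨c, hc, Sym2.mem_mk_left _ _⟩⟩
              intro hEq
              apply hne
              apply Subtype.ext
              show Sym2.map Sum.inl s(a, b) = s(Sum.inl c, Sum.inl d)
              have h5 : s(a, b) = s(c, d) := congrArg Subtype.val hEq
              rw [h5, Sym2.map_pair_eq]
            · have hEc : (⟨e', he'⟩ : (corona2 G).edgeSet) = auxE G c := Subtype.ext hE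
              rw [hEc] at hu
              exact ⟨Sum.inl c,
                ⟨Sum.inl (Sum.inr (Sum.inl c)), ⟨hstar c hu, inrinl_notin_range_bFun c⟩,
                  rfl⟩, hc⟩
    have hγ : totalDomNum (middleGraph G) ≤
        (phi G gdg hgdg (Classical.arbitrary V) '' (D \ Set.range (bFun G))).ncard :=
      Nat.sInf_le ⟨_, hTDS, rfl⟩
    have hcard1 : (phi G gdg hgdg (Classical.arbitrary V) ''
        (D \ Set.range (bFun G))).ncard ≤ (D \ Set.range (bFun G)).ncard :=
      Set.ncard_image_le (Set.toFinite _)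
    have hcard2 : (D \ Set.range (bFun G)).ncard =
        D.ncard - (Set.range (bFun G)).ncard := Set.ncard_diff hBD (Set.toFinite _)
    have hcard3 : (Set.range (bFun G)).ncard = 2 * Fintype.card V := by
      rw [ncard_range_eq (bFun_injective G), Fintype.card_sum]
      ring
    have hBle : (Set.range (bFun G)).ncard ≤ D.ncard :=
      Set.ncard_le_ncard hBD (Set.toFinite _)
    omega

end Stmt15Aux6
theorem stmt15 {V : Type*} [Fintype V] (G : SimpleGraph V) (hG : G.Connected)
    (hn : 2 ≤ Fintype.card V) :
    2 * Fintype.card V + totalDomNum (middleGraph G) ≤ tocDomNum (middleGraph (corona2 G)) ∧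
      tocDomNum (middleGraph (corona2 G)) ≤ 4 * Fintype.card V := by
  have hmem : (4 * Fintype.card V) ∈
      {k | ∃ D, IsTOCDomSet (middleGraph (corona2 G)) D ∧ D.ncard = k} := by
    refine ⟨Set.range (upFun G), ⟨upFun_tds G, upFun_conn G hG hn⟩, ?_⟩
    rw [ncard_range_eq (upFun_injective G)]
    simp only [Fintype.card_sum]
    ring
  constructor
  · have h0 : tocDomNum (middleGraph (corona2 G)) ∈
        {k | ∃ D, IsTOCDomSet (middleGraph (corona2 G)) D ∧ D.ncard = k} :=
      Nat.sInf_mem ⟨_, hmem⟩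
    obtain ⟨D, hD, hcard⟩ := h0
    have h := lower_bound G hG hn hD
    rwa [hcard] at h
  · exact Nat.sInf_le hmem
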